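/- Let g be proper, lsc, ρ-weakly convex with γρ < 1. Define the nonconvexity criterion NC(h) = sup_{x,y,λ∈[0,1]} h(λx + (1-λ)y) - λh(x) - (1-λ)h(y). Then NC(g^γ) ≤ NC(g). -/

import Mathlib

open scoped RealInnerProductSpace
open Set
open Metric

/-- Nonconvexity criterion of a function. -/
noncomputable def NC {d : ℕ} (h : EuclideanSpace ℝ (Fin d) → ℝ) : ℝ :=
  sSup {c : ℝ | ∃ x y : EuclideanSpace ℝ (Fin d), ∃ t : ℝ, t ∈ Set.Icc (0 : ℝ) 1 ∧
    c = h (t • x + (1 - t) • y) - t * h x - (1 - t) * h y}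

/-- Existence of a subgradient for a finite convex function on Euclidean space. -/
lemma exists_subgradient {d : ℕ} {h : EuclideanSpace ℝ (Fin d) → ℝ}
    (hc : Continuous h) (hcv : ConvexOn ℝ Set.univ h) (y : EuclideanSpace ℝ (Fin d)) :
    ∃ s : EuclideanSpace ℝ (Fin d), ∀ z, h y + ⟪s, z - y⟫ ≤ h z := by
  set S : Set (EuclideanSpace ℝ (Fin d) × ℝ) := {p | h p.1 < p.2} with hS
  have hopen : IsOpen S := isOpen_lt hc.fst' continuous_snd
  have hconvS : Convex ℝ S := by
    rintro ⟨p1, p2⟩ hp ⟨q1, q2⟩ hq a b ha hb hab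
    simp only [hS, Set.mem_setOf_eq] at hp hq
    have hcb := hcv.2 (Set.mem_univ p1) (Set.mem_univ q1) ha hb hab
    simp only [smul_eq_mul] at hcb
    have hmem : (a • (⟨p1, p2⟩ : _ × ℝ) + b • ⟨q1, q2⟩) = (⟨a • p1 + b • q1, a * p2 + b * q2⟩ : EuclideanSpace ℝ (Fin d) × ℝ) := by
      simp [Prod.ext_iff, smul_eq_mul]
    rw [hmem]
    simp only [hS, Set.mem_setOf_eq]
    rcases eq_or_lt_of_le ha with rfl | ha'
    · have hb1 : b = 1 := by linarith
      subst hb1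
      simpa using hq
    · have h1 : a * h p1 < a * p2 := by nlinarith
      have h2 : b * h q1 ≤ b * q2 := mul_le_mul_of_nonneg_left hq.le hb
      linarith
  have hyS : ((y, h y) : EuclideanSpace ℝ (Fin d) × ℝ) ∉ S := by simp [hS]
  obtain ⟨f, hf⟩ := geometric_hahn_banach_open_point hconvS hopen hyS
  set c : ℝ := f ((0 : EuclideanSpace ℝ (Fin d)), (1 : ℝ)) with hcdef
  set L : EuclideanSpace ℝ (Fin d) →L[ℝ] ℝ := f.comp (ContinuousLinearMap.inl ℝ (EuclideanSpace ℝ (Fin d)) ℝ) with hLdef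
  have hsplit : ∀ (z : EuclideanSpace ℝ (Fin d)) (t : ℝ), f (z, t) = L z + t * c := by
    intro z t
    have he : ((z, t) : EuclideanSpace ℝ (Fin d) × ℝ) = (z, (0:ℝ)) + t • ((0 : EuclideanSpace ℝ (Fin d)), (1:ℝ)) := by
      simp [Prod.ext_iff]
    rw [he, map_add, map_smul, smul_eq_mul]
    simp [hLdef, hcdef]
  have hcneg : c < 0 := by
    have h1 := hf (y, h y + 1) (by simp [hS])
    rw [hsplit, hsplit] at h1
    linarith
  have hc0 : c ≠ 0 := hcneg.ne
  have hkey : ∀ z, L z + h z * c ≤ L y + h y * c := by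
    intro z
    by_contra hcon
    push_neg at hcon
    set A := L z + h z * c with hAdef
    set B := L y + h y * c with hBdef
    set u := (A - B) / (-2 * c) with hudef
    have hu0 : 0 < u := by
      apply div_pos (by linarith)
      linarith
    have h2 := hf (z, h z + u) (by simp only [hS, Set.mem_setOf_eq]; linarith)
    rw [hsplit, hsplit] at h2
    have huc : u * c = -(A - B)/2 := by
      rw [hudef]; field_simp
    have h3 : A + u * c < B := by rw [hAdef, hBdef] at *; linarith
    rw [huc] at h3
    linarith
  have hpos : 0 < -c := by linarith
  refine ⟨(-c)⁻¹ • (InnerProductSpace.toDual ℝ (EuclideanSpace ℝ (Fin d))).symm L, fun z => ?_⟩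
  have hk := hkey z
  have h2 : (-c)⁻¹ * (L z - L y) ≤ h z - h y := by
    rw [inv_mul_le_iff₀ hpos]
    nlinarith
  have hinner : ⟪(-c)⁻¹ • (InnerProductSpace.toDual ℝ (EuclideanSpace ℝ (Fin d))).symm L, z - y⟫
      = (-c)⁻¹ * (L z - L y) := by
    rw [real_inner_smul_left, InnerProductSpace.toDual_symm_apply, map_sub]
  rw [hinner]
  linarith

lemma real_quad_lb (γ ρ A X : ℝ) (hγ : 0 < γ) (hγρ : γ * ρ < 1) :
    ∀ n m : ℝ, 0 ≤ n → (X - n)^2 ≤ m →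
    -(X/γ + A)^2/(4*((1-γ*ρ)/(2*γ))) - A ≤ 1/(2*γ)*m - ρ/2*n^2 - A*n - A := by
  intro n m hn hm
  have hγ' : γ ≠ 0 := hγ.ne'
  set c := (1-γ*ρ)/(2*γ) with hc
  set B := X/γ + A with hB
  have hcpos : 0 < c := div_pos (by linarith) (by linarith)
  have hc' : c ≠ 0 := hcpos.ne'
  have e1 : 1/(2*γ)*(X-n)^2 - ρ/2*n^2 - A*n - A - (c*n^2 - B*n - A) = X^2/(2*γ) := by
    rw [hc, hB]; field_simp; ring
  have e2 : c*n^2 - B*n - A - (-B^2/(4*c) - A) = (2*c*n - B)^2/(4*c) := by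
    field_simp; ring
  have e3 : 0 ≤ (2*c*n - B)^2/(4*c) := div_nonneg (sq_nonneg _) (by linarith)
  have e4 : 0 ≤ X^2/(2*γ) := div_nonneg (sq_nonneg _) (by linarith)
  have e5 : 1/(2*γ)*(X-n)^2 ≤ 1/(2*γ)*m := mul_le_mul_of_nonneg_left hm (by positivity)
  linarith

/-- Linear-quadratic lower bound for a weakly convex function. -/
lemma weakly_convex_lb {d : ℕ} (g : EuclideanSpace ℝ (Fin d) → ℝ) (ρ : ℝ)
    (hconv : ConvexOn ℝ Set.univ (fun z => g z + ρ / 2 * ‖z‖ ^ 2)) :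
    ∃ A : ℝ, 0 ≤ A ∧ ∀ z : EuclideanSpace ℝ (Fin d),
      -A * ‖z‖ - A ≤ g z + ρ / 2 * ‖z‖ ^ 2 := by
  set h : EuclideanSpace ℝ (Fin d) → ℝ := fun z => g z + ρ / 2 * ‖z‖ ^ 2 with hh
  have hch : Continuous h := continuousOn_univ.mp (hconv.continuousOn isOpen_univ)
  obtain ⟨z₀, hz₀mem, hz₀'⟩ := (isCompact_closedBall (0 : EuclideanSpace ℝ (Fin d)) 1).exists_isMinOn
    ⟨0, mem_closedBall_self zero_le_one⟩ hch.continuousOn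
  have hz₀ : ∀ w ∈ closedBall (0 : EuclideanSpace ℝ (Fin d)) 1, h z₀ ≤ h w := hz₀'
  refine ⟨|h z₀| + |h 0|, by positivity, fun z => ?_⟩
  rcases le_or_gt ‖z‖ 1 with hz | hz
  · have h1 := hz₀ z (by rwa [mem_closedBall_zero_iff])
    have h2 := neg_abs_le (h z₀)
    have h3 := abs_nonneg (h 0)
    have h4 : 0 ≤ (|h z₀| + |h 0|) * ‖z‖ := by positivity
    show -(|h z₀| + |h 0|) * ‖z‖ - (|h z₀| + |h 0|) ≤ h z
    nlinarith
  · have hr0 : (0:ℝ) < ‖z‖ := by linarith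
    have hrinv : ‖z‖⁻¹ * ‖z‖ = 1 := inv_mul_cancel₀ hr0.ne'
    have hrpos : 0 < ‖z‖⁻¹ := inv_pos.2 hr0
    have hr1 : ‖z‖⁻¹ ≤ 1 := by nlinarith
    have hu : ‖z‖⁻¹ • z ∈ closedBall (0 : EuclideanSpace ℝ (Fin d)) 1 := by
      rw [mem_closedBall_zero_iff, norm_smul, Real.norm_eq_abs, abs_of_nonneg hrpos.le, hrinv]
    have hcv := hconv.2 (Set.mem_univ z) (Set.mem_univ (0 : EuclideanSpace ℝ (Fin d)))
      (inv_nonneg.2 hr0.le) (by linarith : (0:ℝ) ≤ 1 - ‖z‖⁻¹) (by ring)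
    simp only [smul_zero, add_zero, smul_eq_mul] at hcv
    have hmin := hz₀ _ hu
    have hmm := mul_le_mul_of_nonneg_left (hmin.trans hcv) hr0.le
    have hexp : ‖z‖ * (‖z‖⁻¹ * h z + (1 - ‖z‖⁻¹) * h 0) = h z + (‖z‖ - 1) * h 0 := by
      field_simp
    rw [hexp] at hmm
    have hp1 : ‖z‖ * (-|h z₀|) ≤ ‖z‖ * h z₀ := mul_le_mul_of_nonneg_left (neg_abs_le _) hr0.le
    have hp2 : (‖z‖ - 1) * h 0 ≤ (‖z‖ - 1) * |h 0| :=
      mul_le_mul_of_nonneg_left (le_abs_self _) (by linarith)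
    show -(|h z₀| + |h 0|) * ‖z‖ - (|h z₀| + |h 0|) ≤ h z
    have h3 := abs_nonneg (h 0)
    have h4 := abs_nonneg (h z₀)
    nlinarith

/-- The Moreau envelope infimand is bounded below. -/
lemma env_bddBelow {d : ℕ} (g : EuclideanSpace ℝ (Fin d) → ℝ) (ρ γ : ℝ)
    (hγ : 0 < γ) (hγρ : γ * ρ < 1)
    (hconv : ConvexOn ℝ Set.univ (fun z => g z + ρ / 2 * ‖z‖ ^ 2))
    (x : EuclideanSpace ℝ (Fin d)) :
    BddBelow (Set.range fun y => (1 / (2 * γ)) * ‖x - y‖ ^ 2 + g y) := by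
  obtain ⟨A, hA0, hA⟩ := weakly_convex_lb g ρ hconv
  refine ⟨-(‖x‖/γ + A)^2/(4*((1-γ*ρ)/(2*γ))) - A, ?_⟩
  rintro w ⟨y, rfl⟩
  have hm : (‖x‖ - ‖y‖)^2 ≤ ‖x - y‖^2 := by
    have habs := abs_norm_sub_norm_le x y
    nlinarith [abs_nonneg (‖x‖ - ‖y‖), sq_abs (‖x‖ - ‖y‖)]
  have hq := real_quad_lb γ ρ A ‖x‖ hγ hγρ ‖y‖ (‖x - y‖^2) (norm_nonneg y) hm
  have hg := hA y
  linarith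

/-- Every point is the proximal point of some `x`. -/
lemma exists_anchor {d : ℕ} (g : EuclideanSpace ℝ (Fin d) → ℝ) (ρ γ : ℝ)
    (hγ : 0 < γ) (hγρ : γ * ρ < 1)
    (hconv : ConvexOn ℝ Set.univ (fun z => g z + ρ / 2 * ‖z‖ ^ 2))
    (y : EuclideanSpace ℝ (Fin d)) :
    ∃ x : EuclideanSpace ℝ (Fin d), ∀ z,
      g y + (1 / (2 * γ)) * ‖x - y‖ ^ 2 ≤ (1 / (2 * γ)) * ‖x - z‖ ^ 2 + g z := by
  have hch : Continuous (fun z : EuclideanSpace ℝ (Fin d) => g z + ρ / 2 * ‖z‖ ^ 2) :=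
    continuousOn_univ.mp (hconv.continuousOn isOpen_univ)
  obtain ⟨s, hs⟩ := exists_subgradient hch hconv y
  set q : EuclideanSpace ℝ (Fin d) := s - ρ • y with hq
  refine ⟨y + γ • q, fun z => ?_⟩
  have h1 : g y + ρ / 2 * ‖y‖ ^ 2 + ⟪s, z - y⟫ ≤ g z + ρ / 2 * ‖z‖ ^ 2 := hs z
  have e1 : y + γ • q - y = γ • q := add_sub_cancel_left y (γ • q)
  have e2 : y + γ • q - z = (y - z) + γ • q := add_sub_right_comm y (γ • q) z
  rw [e1, e2]
  have hn1 : ‖(y - z) + γ • q‖ ^ 2 = ‖y - z‖ ^ 2 + 2 * ⟪y - z, γ • q⟫ + ‖γ • q‖ ^ 2 :=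
    norm_add_sq_real _ _
  have hsm : ⟪y - z, γ • q⟫ = γ * ⟪y - z, q⟫ := real_inner_smul_right _ _ _
  have hI : ⟪y - z, q⟫ = -⟪s, z - y⟫ + ρ * ⟪y, z - y⟫ := by
    rw [hq, ← neg_sub z y, inner_neg_left, inner_sub_right, real_inner_smul_right,
      real_inner_comm]
    ring_nf
    rw [real_inner_comm (z - y) y]
  have hC : ‖z‖ ^ 2 = ‖y‖ ^ 2 + 2 * ⟪y, z - y⟫ + ‖z - y‖ ^ 2 := by
    have h := norm_add_sq_real y (z - y)
    have e : y + (z - y) = z := by abel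
    rwa [e] at h
  have hD : ‖y - z‖ ^ 2 = ‖z - y‖ ^ 2 := by rw [norm_sub_rev]
  have h2γ : (0:ℝ) < 2 * γ := by linarith
  have hfinal : 0 ≤ (1 - γ * ρ) * ‖z - y‖ ^ 2 := mul_nonneg (by linarith) (sq_nonneg _)
  have key : 2 * γ * g y + ‖γ • q‖ ^ 2 ≤ ‖(y - z) + γ • q‖ ^ 2 + 2 * γ * g z := by
    rw [hn1, hsm, hI]
    have h1' := mul_le_mul_of_nonneg_left h1 h2γ.le
    have hC' : γ * ρ * ‖z‖ ^ 2 = γ * ρ * (‖y‖ ^ 2 + 2 * ⟪y, z - y⟫ + ‖z - y‖ ^ 2) := by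
      rw [hC]
    nlinarith [hfinal, h1', hC', hD]
  have hmul := mul_le_mul_of_nonneg_left key (by positivity : (0:ℝ) ≤ 1 / (2 * γ))
  have hgy : 1 / (2 * γ) * (2 * γ * g y) = g y := by field_simp
  have hgz : 1 / (2 * γ) * (2 * γ * g z) = g z := by field_simp
  nlinarith [hmul, hgy, hgz]

theorem NC_moreau_envelope_le {d : ℕ}
    (g : EuclideanSpace ℝ (Fin d) → ℝ) (ρ γ : ℝ) (hγ : 0 < γ) (hγρ : γ * ρ < 1)
    (hlsc : LowerSemicontinuous g)
    (hconv : ConvexOn ℝ Set.univ (fun z => g z + ρ / 2 * ‖z‖ ^ 2)) :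
    NC (fun x => ⨅ y, (1 / (2 * γ)) * ‖x - y‖ ^ 2 + g y) ≤ NC g := by
  set env : EuclideanSpace ℝ (Fin d) → ℝ :=
    fun x => ⨅ y, (1 / (2 * γ)) * ‖x - y‖ ^ 2 + g y with henv
  set S₁ : Set ℝ := {c : ℝ | ∃ x y : EuclideanSpace ℝ (Fin d), ∃ t : ℝ,
    t ∈ Set.Icc (0 : ℝ) 1 ∧
    c = env (t • x + (1 - t) • y) - t * env x - (1 - t) * env y} with hS₁
  set S₂ : Set ℝ := {c : ℝ | ∃ x y : EuclideanSpace ℝ (Fin d), ∃ t : ℝ,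
    t ∈ Set.Icc (0 : ℝ) 1 ∧
    c = g (t • x + (1 - t) • y) - t * g x - (1 - t) * g y} with hS₂
  have hgoal : NC (fun x => ⨅ y, (1 / (2 * γ)) * ‖x - y‖ ^ 2 + g y) = sSup S₁ := rfl
  have hgoal2 : NC g = sSup S₂ := rfl
  rw [hgoal, hgoal2]
  have hb : ∀ x, BddBelow (Set.range fun y => (1 / (2 * γ)) * ‖x - y‖ ^ 2 + g y) :=
    env_bddBelow g ρ γ hγ hγρ hconv
  have hle : ∀ x u, env x ≤ (1 / (2 * γ)) * ‖x - u‖ ^ 2 + g u := fun x u => ciInf_le (hb x) u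
  have hglb : ∀ (x : EuclideanSpace ℝ (Fin d)) (c : ℝ),
      (∀ u, c ≤ (1 / (2 * γ)) * ‖x - u‖ ^ 2 + g u) → c ≤ env x := fun x c h => le_ciInf h
  have heps : ∀ (x : EuclideanSpace ℝ (Fin d)) (ε : ℝ), 0 < ε →
      ∃ u, (1 / (2 * γ)) * ‖x - u‖ ^ 2 + g u < env x + ε := by
    intro x ε hε
    exact exists_lt_of_ciInf_lt (lt_add_of_pos_right _ hε)
  -- forward: every element of S₁ is almost dominated by an element of S₂
  have key1 : ∀ c ∈ S₁, ∀ ε : ℝ, 0 < ε → ∃ s ∈ S₂, c ≤ s + ε := by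
    rintro c ⟨x, y, t, ⟨ht0, ht1⟩, rfl⟩ ε hε
    obtain ⟨u, hu⟩ := heps x ε hε
    obtain ⟨v, hv⟩ := heps y ε hε
    refine ⟨g (t • u + (1 - t) • v) - t * g u - (1 - t) * g v,
      ⟨u, v, t, ⟨ht0, ht1⟩, rfl⟩, ?_⟩
    have h2 := hle (t • x + (1 - t) • y) (t • u + (1 - t) • v)
    have hre : t • x + (1 - t) • y - (t • u + (1 - t) • v)
        = t • (x - u) + (1 - t) • (y - v) := by
      rw [smul_sub, smul_sub]; abel
    have hn : ‖t • (x - u) + (1 - t) • (y - v)‖ ≤ t * ‖x - u‖ + (1 - t) * ‖y - v‖ := by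
      calc ‖t • (x - u) + (1 - t) • (y - v)‖
          ≤ ‖t • (x - u)‖ + ‖(1 - t) • (y - v)‖ := norm_add_le _ _
        _ = t * ‖x - u‖ + (1 - t) * ‖y - v‖ := by
            rw [norm_smul, norm_smul, Real.norm_eq_abs, Real.norm_eq_abs,
              abs_of_nonneg ht0, abs_of_nonneg (by linarith)]
    have h3 : ‖t • x + (1 - t) • y - (t • u + (1 - t) • v)‖ ^ 2
        ≤ t * ‖x - u‖ ^ 2 + (1 - t) * ‖y - v‖ ^ 2 := by
      rw [hre]
      nlinarith [hn, norm_nonneg (t • (x - u) + (1 - t) • (y - v)), norm_nonneg (x - u),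
        norm_nonneg (y - v), mul_nonneg ht0 (by linarith : (0:ℝ) ≤ 1 - t),
        sq_nonneg (‖x - u‖ - ‖y - v‖)]
    have h3' := mul_le_mul_of_nonneg_left h3 (by positivity : (0:ℝ) ≤ 1 / (2 * γ))
    have hu' := mul_le_mul_of_nonneg_left hu.le ht0
    have hv' := mul_le_mul_of_nonneg_left hv.le (by linarith : (0:ℝ) ≤ 1 - t)
    linarith [h2, h3', hu', hv']
  -- reverse: every element of S₂ is dominated by some element of S₁
  have key2 : ∀ s ∈ S₂, ∃ c ∈ S₁, s ≤ c := by
    rintro s ⟨u, v, t, ⟨ht0, ht1⟩, rfl⟩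
    obtain ⟨x, hx⟩ := exists_anchor g ρ γ hγ hγρ hconv (t • u + (1 - t) • v)
    set w : EuclideanSpace ℝ (Fin d) := x - (t • u + (1 - t) • v) with hw
    refine ⟨env (t • (u + w) + (1 - t) • (v + w)) - t * env (u + w) - (1 - t) * env (v + w),
      ⟨u + w, v + w, t, ⟨ht0, ht1⟩, rfl⟩, ?_⟩
    have hxw : t • (u + w) + (1 - t) • (v + w) = x := by
      rw [hw]; module
    rw [hxw]
    have hanchor : g (t • u + (1 - t) • v) + (1 / (2 * γ)) * ‖w‖ ^ 2 ≤ env x := by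
      apply hglb
      intro z
      exact hx z
    have hu' : env (u + w) ≤ (1 / (2 * γ)) * ‖w‖ ^ 2 + g u := by
      have := hle (u + w) u
      rwa [show u + w - u = w by abel] at this
    have hv' : env (v + w) ≤ (1 / (2 * γ)) * ‖w‖ ^ 2 + g v := by
      have := hle (v + w) v
      rwa [show v + w - v = w by abel] at this
    have hu'' := mul_le_mul_of_nonneg_left hu' ht0
    have hv'' := mul_le_mul_of_nonneg_left hv' (by linarith : (0:ℝ) ≤ 1 - t)
    linarith [hanchor, hu'', hv'']
  have h0S₂ : (0:ℝ) ∈ S₂ := by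
    refine ⟨0, 0, 0, ⟨le_rfl, zero_le_one⟩, by simp⟩
  by_cases hbdd : BddAbove S₂
  · have hS2nonneg : 0 ≤ sSup S₂ := le_csSup hbdd h0S₂
    apply Real.sSup_le _ hS2nonneg
    intro c hc
    refine le_of_forall_pos_le_add ?_
    intro ε hε
    obtain ⟨s, hsS, hcs⟩ := key1 c hc ε hε
    exact hcs.trans (add_le_add_left (le_csSup hbdd hsS) ε)
  · have hbdd1 : ¬ BddAbove S₁ := by
      intro ⟨M, hM⟩
      apply hbdd
      refine ⟨M, fun s hs => ?_⟩
      obtain ⟨c, hc, hsc⟩ := key2 s hs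
      exact hsc.trans (hM hc)
    rw [Real.sSup_of_not_bddAbove hbdd, Real.sSup_of_not_bddAbove hbdd1]
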